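/- arXiv:2407.11619 — 4 statements merged into one kernel-verified Lean document; each statement's English description precedes it below -/
import Mathlib

section
/- For any hypothesis class H and manipulation graph G, the minimax optimal number of mistakes made by deterministic learners against realizable sequences equals the strategic Littlestone dimension: M(H,G) = SLdim(H,G). -/
open Classical

variable {X : Type*}

/-- Inclusive out-neighborhood `N⁺_G[x]` in the directed manipulation graph `G`. -/
def Nplus (G : X → X → Prop) (x : X) : Set X := insert x {v | G x v}

/-- Inclusive in-neighborhood `N⁻_G[v]`. -/
def Nminus (G : X → X → Prop) (v : X) : Set X := insert v {x | G x v}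

/-- Effective classifier: `h̃_G x = +1` iff some node of `N⁺_G[x]` is labeled positive by `h`.
    (`true` encodes the label `+1`, `false` the label `-1`.) -/
noncomputable def eff (G : X → X → Prop) (h : X → Bool) (x : X) : Bool :=
  if ∃ v ∈ Nplus G x, h v = true then true else false

/-- Subclass of `F` consistent with the false-negative observation `(v,+1)`. -/
noncomputable def consFN (G : X → X → Prop) (F : Set (X → Bool)) (v : X) : Set (X → Bool) :=
  {h ∈ F | eff G h v = true}

/-- Subclass of `F` consistent with the false-positive observation `(v,-1)`. -/
noncomputable def consFP (G : X → X → Prop) (F : Set (X → Bool)) (v : X) : Set (X → Bool) :=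
  {h ∈ F | ∃ x ∈ Nminus G v, eff G h x = false}

/-- Subclass of `F` consistent with observation `(v,y)`. -/
noncomputable def consObs (G : X → X → Prop) (F : Set (X → Bool)) (v : X) (y : Bool) :
    Set (X → Bool) :=
  if y = true then consFN G F v else consFP G F v

/-- `Shatters G H d`: there exists a strategic Littlestone tree of depth `d` shattered by `H`
under the manipulation graph `G`.  The root of a depth-`(d+1)` tree is a node `x` with one
false-negative edge `(x,+1)` and false-positive edges `(v,-1)` for every `v ∈ N⁺_G[x]`, and
path consistency decomposes into consistency with the first edge together with shattering of
the corresponding subtree by the consistent subclass. -/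
noncomputable def Shatters (G : X → X → Prop) (H : Set (X → Bool)) : ℕ → Prop
  | 0 => H.Nonempty
  | d + 1 => ∃ x : X,
      Shatters G (consFN G H x) d ∧ ∀ v ∈ Nplus G x, Shatters G (consFP G H v) d

/-- The strategic Littlestone dimension of `H` under `G`. -/
noncomputable def SLdim (G : X → X → Prop) (H : Set (X → Bool)) : ℕ∞ :=
  sSup {d : ℕ∞ | ∃ n : ℕ, d = n ∧ Shatters G H n}


/-- A deterministic online learner: maps the history of observed (manipulated feature, label)
pairs to the classifier committed to in the next round. -/
abbrev Alg (X : Type*) := List (X × Bool) → X → Bool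

/-- `v` is a valid best response of an agent with true features `x` facing classifier `h`:
either `v` is a positively-labeled node of `N⁺_G[x]`, or the whole neighborhood is labeled
negative and the agent stays put. -/
def isBR (G : X → X → Prop) (h : X → Bool) (x v : X) : Prop :=
  (v ∈ Nplus G x ∧ h v = true) ∨ (v = x ∧ ∀ u ∈ Nplus G x, h u = false)

/-- The history of observations available to the learner before round `t`. -/
def hist (v : ℕ → X) (y : ℕ → Bool) (t : ℕ) : List (X × Bool) :=
  (List.range t).map fun i => (v i, y i)

/-- The sequence of agents `(x_t , y_t)_{t < T}` is realizable: some `h* ∈ H` labels every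
agent correctly under manipulation. -/
noncomputable def RealizableSeq (G : X → X → Prop) (H : Set (X → Bool)) (T : ℕ)
    (x : ℕ → X) (y : ℕ → Bool) : Prop :=
  ∃ h ∈ H, ∀ t < T, eff G h (x t) = y t

/-- Each observed node `v t` is a valid best response to the learner's classifier at round `t`. -/
def ValidPlay (G : X → X → Prop) (A : Alg X) (T : ℕ) (x : ℕ → X) (y : ℕ → Bool)
    (v : ℕ → X) : Prop :=
  ∀ t < T, isBR G (A (hist v y t)) (x t) (v t)

/-- Number of mistakes of algorithm `A` over `T` rounds of the play `(v,y)`. -/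
def mistakes (A : Alg X) (T : ℕ) (y : ℕ → Bool) (v : ℕ → X) : ℕ :=
  ((Finset.range T).filter fun t => A (hist v y t) (v t) ≠ y t).card

/-- Worst-case number of mistakes of the deterministic learner `A` over all realizable
adversarial plays. -/
noncomputable def MistakeBound (G : X → X → Prop) (H : Set (X → Bool)) (A : Alg X) : ℕ∞ :=
  sSup {n : ℕ∞ | ∃ (T : ℕ) (x : ℕ → X) (y : ℕ → Bool) (v : ℕ → X),
    RealizableSeq G H T x y ∧ ValidPlay G A T x y v ∧ n = (mistakes A T y v : ℕ∞)}

/-- The minimax optimal deterministic mistake bound `M(H,G)`. -/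
noncomputable def Mopt (G : X → X → Prop) (H : Set (X → Bool)) : ℕ∞ :=
  ⨅ A : Alg X, MistakeBound G H A



/-! ### Auxiliary development -/

section AuxDev

variable (G : X → X → Prop)

lemma mem_nplus_self (x : X) : x ∈ Nplus G x := Set.mem_insert _ _

lemma nplus_nminus {x v : X} (h : v ∈ Nplus G x) : x ∈ Nminus G v := by
  rcases h with h | h
  · exact h ▸ Set.mem_insert _ _
  · exact Set.mem_insert_of_mem _ h

lemma nminus_nplus {x v : X} (h : x ∈ Nminus G v) : v ∈ Nplus G x := by
  rcases h with h | h
  · exact h ▸ Set.mem_insert _ _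
  · exact Set.mem_insert_of_mem _ h

lemma shatters_zero (F : Set (X → Bool)) : Shatters G F 0 ↔ F.Nonempty := Iff.rfl

lemma shatters_succ (F : Set (X → Bool)) (d : ℕ) :
    Shatters G F (d + 1) ↔ ∃ x : X,
      Shatters G (consFN G F x) d ∧ ∀ v ∈ Nplus G x, Shatters G (consFP G F v) d := Iff.rfl

/-! #### The SOA learner -/

/-- The classifier played by the SOA with version space `F` and budget `d`. -/
noncomputable def cls (F : Set (X → Bool)) (d : ℕ) : X → Bool :=
  fun v => if Shatters G (consFP G F v) d then false else true

lemma cls_eq_false_iff (F : Set (X → Bool)) (d : ℕ) (u : X) :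
    cls G F d u = false ↔ Shatters G (consFP G F u) d := by
  by_cases h : Shatters G (consFP G F u) d <;> simp [cls, h]

lemma cls_eq_true_iff (F : Set (X → Bool)) (d : ℕ) (u : X) :
    cls G F d u = true ↔ ¬ Shatters G (consFP G F u) d := by
  by_cases h : Shatters G (consFP G F u) d <;> simp [cls, h]

/-- One update step of the SOA: update the version space only on mistakes. -/
noncomputable def stepF : (Set (X → Bool) × ℕ) → (X × Bool) → (Set (X → Bool) × ℕ) :=
  fun s p => if cls G s.1 s.2 p.1 ≠ p.2 then (consObs G s.1 p.1 p.2, s.2 - 1) else s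

/-- The SOA state after processing a history. -/
noncomputable def stateOf (H : Set (X → Bool)) (D : ℕ) (l : List (X × Bool)) :
    Set (X → Bool) × ℕ := l.foldl (stepF G) (H, D)

/-- The Strategic Standard Optimal Algorithm. -/
noncomputable def SOA (H : Set (X → Bool)) (D : ℕ) : Alg X :=
  fun l => cls G (stateOf G H D l).1 (stateOf G H D l).2

lemma hist_succ (v : ℕ → X) (y : ℕ → Bool) (t : ℕ) :
    hist v y (t + 1) = hist v y t ++ [(v t, y t)] := by
  simp [hist, List.range_succ]

lemma stateOf_hist_succ (H : Set (X → Bool)) (D : ℕ) (v : ℕ → X) (y : ℕ → Bool) (t : ℕ) :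
    stateOf G H D (hist v y (t + 1)) =
      stepF G (stateOf G H D (hist v y t)) (v t, y t) := by
  rw [hist_succ, stateOf, List.foldl_append]; rfl

lemma mistakes_succ (A : Alg X) (t : ℕ) (y : ℕ → Bool) (v : ℕ → X) :
    mistakes A (t + 1) y v =
      mistakes A t y v + (if A (hist v y t) (v t) ≠ y t then 1 else 0) := by
  classical
  unfold mistakes
  rw [Finset.range_add_one, Finset.filter_insert]
  by_cases h : A (hist v y t) (v t) ≠ y t
  · rw [if_pos h, if_pos h, Finset.card_insert_of_notMem (by simp)]
  · rw [if_neg h, if_neg h, Nat.add_zero]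

/-- Invariant maintained by the SOA along any realizable valid play. -/
lemma soa_invariant (H : Set (X → Bool)) (D : ℕ)
    (hND : ¬ Shatters G H (D + 1))
    (T : ℕ) (x : ℕ → X) (y : ℕ → Bool) (v : ℕ → X)
    (hstar : X → Bool) (hmem : hstar ∈ H)
    (hreal : ∀ t < T, eff G hstar (x t) = y t)
    (hvalid : ValidPlay G (SOA G H D) T x y v) :
    ∀ t, t ≤ T →
      hstar ∈ (stateOf G H D (hist v y t)).1 ∧
      ¬ Shatters G (stateOf G H D (hist v y t)).1 ((stateOf G H D (hist v y t)).2 + 1) ∧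
      mistakes (SOA G H D) t y v + (stateOf G H D (hist v y t)).2 = D := by
  intro t
  induction t with
  | zero =>
    intro _
    have h0 : hist v y 0 = [] := by simp [hist]
    have hs : stateOf G H D (hist v y 0) = (H, D) := by rw [h0]; rfl
    have hm : mistakes (SOA G H D) 0 y v = 0 := by simp [mistakes]
    rw [hs, hm]
    exact ⟨hmem, hND, by simp⟩
  | succ t ih =>
    intro hT
    obtain ⟨h1, h2, h3⟩ := ih (le_of_lt (Nat.lt_of_succ_le hT))
    set s := stateOf G H D (hist v y t) with hs
    have hstep : stateOf G H D (hist v y (t + 1)) = stepF G s (v t, y t) :=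
      stateOf_hist_succ G H D v y t
    have hA : SOA G H D (hist v y t) = cls G s.1 s.2 := rfl
    have hmsucc := mistakes_succ (SOA G H D) t y v
    by_cases hmis : cls G s.1 s.2 (v t) = y t
    · -- no mistake at round t
      have hstep' : stepF G s (v t, y t) = s := by
        simp [stepF, hmis]
      have hm : mistakes (SOA G H D) (t + 1) y v = mistakes (SOA G H D) t y v := by
        rw [hmsucc, hA, if_neg (by simp [hmis]), Nat.add_zero]
      rw [hstep, hstep', hm]
      exact ⟨h1, h2, h3⟩
    · -- mistake at round t
      have hstep' : stepF G s (v t, y t) = (consObs G s.1 (v t) (y t), s.2 - 1) := by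
        simp [stepF, hmis]
      have hm : mistakes (SOA G H D) (t + 1) y v = mistakes (SOA G H D) t y v + 1 := by
        rw [hmsucc, hA, if_pos hmis]
      have hbr := hvalid t (Nat.lt_of_succ_le hT)
      have hbr' : isBR G (cls G s.1 s.2) (x t) (v t) := by
        rwa [hA] at hbr
      have hrt : eff G hstar (x t) = y t := hreal t (Nat.lt_of_succ_le hT)
      -- case on the true label
      cases hyt : y t with
      | true =>
        -- false negative mistake
        have hvf : cls G s.1 s.2 (v t) = false := by
          rw [hyt] at hmis
          exact Bool.eq_false_iff.mpr hmis
        have hright : v t = x t ∧ ∀ u ∈ Nplus G (x t), cls G s.1 s.2 u = false := by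
          rcases hbr' with ⟨_, htrue⟩ | h
          · rw [hvf] at htrue; exact absurd htrue (by simp)
          · exact h
        obtain ⟨hvx, hall⟩ := hright
        have hmemFN : hstar ∈ consFN G s.1 (v t) := by
          refine ⟨h1, ?_⟩
          rw [hvx, hrt, hyt]
        have hnFN : ¬ Shatters G (consFN G s.1 (v t)) s.2 := by
          intro hS
          apply h2
          refine ⟨v t, hS, fun u hu => ?_⟩
          have := hall u (by rwa [hvx] at hu)
          exact (cls_eq_false_iff G s.1 s.2 u).mp this
        have hd1 : 1 ≤ s.2 := by
          by_contra hd
          have hd0 : s.2 = 0 := by omega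
          exact hnFN (hd0 ▸ (⟨hstar, hmemFN⟩ : (consFN G s.1 (v t)).Nonempty))
        have hobs : consObs G s.1 (v t) (y t) = consFN G s.1 (v t) := by
          rw [hyt]; simp [consObs]
        rw [hstep, hstep', hm]
        refine ⟨by rw [hobs]; exact hmemFN, ?_, by omega⟩
        simp only [hobs]
        rwa [Nat.sub_add_cancel hd1]
      | false =>
        -- false positive mistake
        have hvt : cls G s.1 s.2 (v t) = true := by
          rw [hyt] at hmis
          simpa using hmis
        have hleft : v t ∈ Nplus G (x t) := by
          rcases hbr' with ⟨h, _⟩ | ⟨hvx, hall⟩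
          · exact h
          · exfalso
            have := hall (v t) (hvx ▸ mem_nplus_self G (x t))
            rw [hvt] at this; exact absurd this (by simp)
        have hmemFP : hstar ∈ consFP G s.1 (v t) := by
          refine ⟨h1, x t, nplus_nminus G hleft, ?_⟩
          rw [hrt, hyt]
        have hnFP : ¬ Shatters G (consFP G s.1 (v t)) s.2 :=
          (cls_eq_true_iff G s.1 s.2 (v t)).mp hvt
        have hd1 : 1 ≤ s.2 := by
          by_contra hd
          have hd0 : s.2 = 0 := by omega
          exact hnFP (hd0 ▸ (⟨hstar, hmemFP⟩ : (consFP G s.1 (v t)).Nonempty))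
        have hobs : consObs G s.1 (v t) (y t) = consFP G s.1 (v t) := by
          rw [hyt]; simp [consObs]
        rw [hstep, hstep', hm]
        refine ⟨by rw [hobs]; exact hmemFP, ?_, by omega⟩
        simp only [hobs]
        rwa [Nat.sub_add_cancel hd1]

/-- The SOA makes at most `D` mistakes whenever `H` does not shatter a tree of depth `D+1`. -/
lemma soa_bound (H : Set (X → Bool)) (D : ℕ) (hND : ¬ Shatters G H (D + 1)) :
    MistakeBound G H (SOA G H D) ≤ (D : ℕ∞) := by
  apply sSup_le
  rintro n ⟨T, x, y, v, ⟨hstar, hmem, hreal⟩, hvalid, rfl⟩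
  have h := (soa_invariant G H D hND T x y v hstar hmem hreal hvalid T le_rfl).2.2
  exact_mod_cast Nat.le.intro h

/-! #### The adversary -/

/-- Prepend a value to a sequence. -/
noncomputable def consfun {α : Type*} (a : α) (f : ℕ → α) : ℕ → α :=
  fun t => if t = 0 then a else f (t - 1)

lemma consfun_zero {α : Type*} (a : α) (f : ℕ → α) : consfun a f 0 = a := rfl

lemma consfun_succ {α : Type*} (a : α) (f : ℕ → α) (t : ℕ) : consfun a f (t + 1) = f t := by
  simp [consfun]

lemma hist_consfun (a : X) (b : Bool) (v : ℕ → X) (y : ℕ → Bool) (t : ℕ) :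
    hist (consfun a v) (consfun b y) (t + 1) = (a, b) :: hist v y t := by
  unfold hist
  rw [List.range_succ_eq_map, List.map_cons, List.map_map]
  congr 1

/-- Adversary construction: from a shattered tree of depth `n`, force `n` mistakes. -/
lemma adversary [Nonempty X] (A : Alg X) :
    ∀ (n : ℕ) (F : Set (X → Bool)) (pre : List (X × Bool)), Shatters G F n →
    ∃ (x v : ℕ → X) (y : ℕ → Bool) (hstar : X → Bool),
      hstar ∈ F ∧
      (∀ t < n, A (pre ++ hist v y t) (v t) ≠ y t) ∧
      (∀ t < n, isBR G (A (pre ++ hist v y t)) (x t) (v t)) ∧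
      (∀ t < n, eff G hstar (x t) = y t) := by
  intro n
  induction n with
  | zero =>
    intro F pre hS
    obtain ⟨hstar, hmem⟩ := hS
    exact ⟨fun _ => Classical.arbitrary X, fun _ => Classical.arbitrary X, fun _ => true,
      hstar, hmem, fun t ht => absurd ht (by omega), fun t ht => absurd ht (by omega),
      fun t ht => absurd ht (by omega)⟩
  | succ n ih =>
    intro F pre hS
    obtain ⟨x0, hFN, hFP⟩ := hS
    by_cases hc : ∃ u ∈ Nplus G x0, A pre u = true
    · -- adversary presents a negative agent that manipulates to u
      obtain ⟨u, hu, hAu⟩ := hc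
      obtain ⟨x, v, y, hstar, hmemc, hmis, hbr, hcons⟩ :=
        ih (consFP G F u) (pre ++ [(u, false)]) (hFP u hu)
      obtain ⟨hF, x', hx', heffx'⟩ := hmemc
      refine ⟨consfun x' x, consfun u v, consfun false y, hstar, hF, ?_, ?_, ?_⟩
      all_goals intro t ht
      all_goals rcases t with _ | t
      · -- mistake at round 0
        have h0 : hist (consfun u v) (consfun false y) 0 = [] := by simp [hist]
        rw [h0, List.append_nil, consfun_zero, consfun_zero, hAu]
        simp
      · have hrec : pre ++ hist (consfun u v) (consfun false y) (t + 1) =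
            (pre ++ [(u, false)]) ++ hist v y t := by
          rw [hist_consfun]; simp
        rw [hrec, consfun_succ, consfun_succ]
        exact hmis t (by omega)
      · -- best response at round 0
        have h0 : hist (consfun u v) (consfun false y) 0 = [] := by simp [hist]
        rw [h0, List.append_nil, consfun_zero, consfun_zero]
        exact Or.inl ⟨nminus_nplus G hx', hAu⟩
      · have hrec : pre ++ hist (consfun u v) (consfun false y) (t + 1) =
            (pre ++ [(u, false)]) ++ hist v y t := by
          rw [hist_consfun]; simp
        rw [hrec, consfun_succ, consfun_succ]
        exact hbr t (by omega)
      · rw [consfun_zero, consfun_zero]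
        exact heffx'
      · rw [consfun_succ, consfun_succ]
        exact hcons t (by omega)
    · -- the whole neighborhood of x0 is labeled negative
      push_neg at hc
      have hc' : ∀ u ∈ Nplus G x0, A pre u = false := by
        intro u hu
        exact Bool.eq_false_iff.mpr (hc u hu)
      obtain ⟨x, v, y, hstar, hmemc, hmis, hbr, hcons⟩ :=
        ih (consFN G F x0) (pre ++ [(x0, true)]) hFN
      obtain ⟨hF, heff⟩ := hmemc
      refine ⟨consfun x0 x, consfun x0 v, consfun true y, hstar, hF, ?_, ?_, ?_⟩
      all_goals intro t ht
      all_goals rcases t with _ | t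
      · have h0 : hist (consfun x0 v) (consfun true y) 0 = [] := by simp [hist]
        rw [h0, List.append_nil, consfun_zero, consfun_zero,
          hc' x0 (mem_nplus_self G x0)]
        simp
      · have hrec : pre ++ hist (consfun x0 v) (consfun true y) (t + 1) =
            (pre ++ [(x0, true)]) ++ hist v y t := by
          rw [hist_consfun]; simp
        rw [hrec, consfun_succ, consfun_succ]
        exact hmis t (by omega)
      · have h0 : hist (consfun x0 v) (consfun true y) 0 = [] := by simp [hist]
        rw [h0, List.append_nil, consfun_zero, consfun_zero]
        exact Or.inr ⟨rfl, hc'⟩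
      · have hrec : pre ++ hist (consfun x0 v) (consfun true y) (t + 1) =
            (pre ++ [(x0, true)]) ++ hist v y t := by
          rw [hist_consfun]; simp
        rw [hrec, consfun_succ, consfun_succ]
        exact hbr t (by omega)
      · rw [consfun_zero, consfun_zero]
        exact heff
      · rw [consfun_succ, consfun_succ]
        exact hcons t (by omega)

/-- Lower bound: shattering depth `n` forces `n` mistakes on every deterministic learner. -/
lemma lower_bound (H : Set (X → Bool)) (A : Alg X) (n : ℕ) (hS : Shatters G H n) :
    (n : ℕ∞) ≤ MistakeBound G H A := by
  rcases n with _ | m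
  · exact zero_le
  · haveI : Nonempty X := ⟨hS.choose⟩
    obtain ⟨x, v, y, hstar, hF, hmis, hbr, hcons⟩ := adversary G A (m + 1) H [] hS
    simp only [List.nil_append] at hmis hbr
    have hmcount : mistakes A (m + 1) y v = m + 1 := by
      unfold mistakes
      rw [Finset.filter_true_of_mem, Finset.card_range]
      intro t ht
      exact hmis t (Finset.mem_range.mp ht)
    apply le_sSup
    exact ⟨m + 1, x, y, v, ⟨hstar, hF, hcons⟩, hbr, by rw [hmcount]⟩

end AuxDev

/-- For any hypothesis class `H` and manipulation graph `G`, the minimax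
optimal number of mistakes of deterministic learners against realizable sequences equals the
strategic Littlestone dimension: `M(H,G) = SLdim(H,G)`. -/
theorem minimax_mistakes_eq_SLdim (X : Type*) (G : X → X → Prop) (H : Set (X → Bool)) :
    Mopt G H = SLdim G H := by
  apply le_antisymm
  · -- Upper bound: Mopt ≤ SLdim, via the SOA
    by_cases htop : SLdim G H = ⊤
    · rw [htop]; exact le_top
    · have hD : (((SLdim G H).toNat : ℕ) : ℕ∞) = SLdim G H := ENat.coe_toNat htop
      set D := (SLdim G H).toNat with hDdef
      have hND : ¬ Shatters G H (D + 1) := by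
        intro hSh
        have hle : ((D + 1 : ℕ) : ℕ∞) ≤ SLdim G H :=
          le_sSup ⟨D + 1, rfl, hSh⟩
        rw [← hD] at hle
        have : (D + 1 : ℕ) ≤ D := by exact_mod_cast hle
        omega
      calc Mopt G H ≤ MistakeBound G H (SOA G H D) := iInf_le _ _
        _ ≤ (D : ℕ∞) := soa_bound G H D hND
        _ = SLdim G H := hD
  · -- Lower bound: SLdim ≤ Mopt, via the adversary
    apply sSup_le
    rintro d ⟨n, rfl, hS⟩
    exact le_iInf fun A => lower_bound G H A n hS
end

section
/- If a directed manipulation graph G decomposes as a disjoint union G = G₁ ⊔ G₂ of subgraphs on disjoint vertex sets X₁, X₂, and H = H₁ × H₂ is the product hypothesis class (each h labels X₁ according to some h₁ ∈ H₁ and X₂ according to some h₂ ∈ H₂), then SLdim(H,G) ≤ M₁ + M₂ where M_i is any achievable deterministic mistake bound for (H_i, G_i); in particular SLdim(H,G) ≤ M(H₁,G₁) + M(H₂,G₂). -/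
open Classical

variable {X : Type*}

/-- The disjoint union of two manipulation graphs on disjoint vertex sets. -/
def sumG {X₁ X₂ : Type*} (G₁ : X₁ → X₁ → Prop) (G₂ : X₂ → X₂ → Prop) :
    X₁ ⊕ X₂ → X₁ ⊕ X₂ → Prop
  | .inl a, .inl b => G₁ a b
  | .inr a, .inr b => G₂ a b
  | _, _ => False

/-- The product hypothesis class: each hypothesis labels `X₁` by some `h₁ ∈ H₁` and `X₂` by
some `h₂ ∈ H₂`. -/
def prodH {X₁ X₂ : Type*} (H₁ : Set (X₁ → Bool)) (H₂ : Set (X₂ → Bool)) :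
    Set (X₁ ⊕ X₂ → Bool) :=
  {h | ∃ h₁ ∈ H₁, ∃ h₂ ∈ H₂, h = Sum.elim h₁ h₂}

section Aux

lemma mem_Nplus {G : X → X → Prop} {x v : X} : v ∈ Nplus G x ↔ v = x ∨ G x v :=
  Set.mem_insert_iff

lemma mem_Nminus {G : X → X → Prop} {v x : X} : x ∈ Nminus G v ↔ x = v ∨ G x v :=
  Set.mem_insert_iff

lemma self_mem_Nplus {G : X → X → Prop} (x : X) : x ∈ Nplus G x :=
  Set.mem_insert _ _

lemma Nplus_of_Nminus {G : X → X → Prop} {x v : X} (h : x ∈ Nminus G v) : v ∈ Nplus G x := by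
  rcases mem_Nminus.mp h with rfl | h
  · exact self_mem_Nplus _
  · exact mem_Nplus.mpr (Or.inr h)

lemma eff_true_iff (G : X → X → Prop) (h : X → Bool) (x : X) :
    eff G h x = true ↔ ∃ v ∈ Nplus G x, h v = true := by
  unfold eff; split <;> simp_all

variable {X₁ X₂ : Type*} {G₁ : X₁ → X₁ → Prop} {G₂ : X₂ → X₂ → Prop}

lemma eff_sum_inl (h₁ : X₁ → Bool) (h₂ : X₂ → Bool) (a : X₁) :
    eff (sumG G₁ G₂) (Sum.elim h₁ h₂) (Sum.inl a) = eff G₁ h₁ a := by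
  rw [Bool.eq_iff_iff, eff_true_iff, eff_true_iff]
  constructor
  · rintro ⟨v, hv, hval⟩
    rcases mem_Nplus.mp hv with rfl | hv
    · exact ⟨a, self_mem_Nplus _, hval⟩
    · cases v with
      | inl b => exact ⟨b, mem_Nplus.mpr (Or.inr hv), hval⟩
      | inr b => exact absurd hv (by simp [sumG])
  · rintro ⟨u, hu, hval⟩
    rcases mem_Nplus.mp hu with rfl | hu
    · exact ⟨Sum.inl u, self_mem_Nplus _, hval⟩
    · exact ⟨Sum.inl u, mem_Nplus.mpr (Or.inr hu), hval⟩

lemma eff_sum_inr (h₁ : X₁ → Bool) (h₂ : X₂ → Bool) (a : X₂) :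
    eff (sumG G₁ G₂) (Sum.elim h₁ h₂) (Sum.inr a) = eff G₂ h₂ a := by
  rw [Bool.eq_iff_iff, eff_true_iff, eff_true_iff]
  constructor
  · rintro ⟨v, hv, hval⟩
    rcases mem_Nplus.mp hv with rfl | hv
    · exact ⟨a, self_mem_Nplus _, hval⟩
    · cases v with
      | inr b => exact ⟨b, mem_Nplus.mpr (Or.inr hv), hval⟩
      | inl b => exact absurd hv (by simp [sumG])
  · rintro ⟨u, hu, hval⟩
    rcases mem_Nplus.mp hu with rfl | hu
    · exact ⟨Sum.inr u, self_mem_Nplus _, hval⟩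
    · exact ⟨Sum.inr u, mem_Nplus.mpr (Or.inr hu), hval⟩

lemma consFN_inl (H₁ : Set (X₁ → Bool)) (H₂ : Set (X₂ → Bool)) (x : X₁) :
    consFN (sumG G₁ G₂) (prodH H₁ H₂) (Sum.inl x) = prodH (consFN G₁ H₁ x) H₂ := by
  ext h
  constructor
  · rintro ⟨⟨h₁, m₁, h₂, m₂, rfl⟩, he⟩
    exact ⟨h₁, ⟨m₁, by rwa [eff_sum_inl] at he⟩, h₂, m₂, rfl⟩
  · rintro ⟨h₁, ⟨m₁, he⟩, h₂, m₂, rfl⟩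
    exact ⟨⟨h₁, m₁, h₂, m₂, rfl⟩, by rwa [eff_sum_inl]⟩

lemma consFN_inr (H₁ : Set (X₁ → Bool)) (H₂ : Set (X₂ → Bool)) (x : X₂) :
    consFN (sumG G₁ G₂) (prodH H₁ H₂) (Sum.inr x) = prodH H₁ (consFN G₂ H₂ x) := by
  ext h
  constructor
  · rintro ⟨⟨h₁, m₁, h₂, m₂, rfl⟩, he⟩
    exact ⟨h₁, m₁, h₂, ⟨m₂, by rwa [eff_sum_inr] at he⟩, rfl⟩
  · rintro ⟨h₁, m₁, h₂, ⟨m₂, he⟩, rfl⟩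
    exact ⟨⟨h₁, m₁, h₂, m₂, rfl⟩, by rwa [eff_sum_inr]⟩

lemma consFP_inl (H₁ : Set (X₁ → Bool)) (H₂ : Set (X₂ → Bool)) (u : X₁) :
    consFP (sumG G₁ G₂) (prodH H₁ H₂) (Sum.inl u) = prodH (consFP G₁ H₁ u) H₂ := by
  ext h
  constructor
  · rintro ⟨⟨h₁, m₁, h₂, m₂, rfl⟩, w, hw, he⟩
    rcases mem_Nminus.mp hw with rfl | hw
    · exact ⟨h₁, ⟨m₁, u, self_mem_Nplus _, by rwa [eff_sum_inl] at he⟩, h₂, m₂, rfl⟩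
    · cases w with
      | inl b =>
        exact ⟨h₁, ⟨m₁, b, mem_Nminus.mpr (Or.inr hw), by rwa [eff_sum_inl] at he⟩,
          h₂, m₂, rfl⟩
      | inr b => exact absurd hw (by simp [sumG])
  · rintro ⟨h₁, ⟨m₁, w, hw, he⟩, h₂, m₂, rfl⟩
    refine ⟨⟨h₁, m₁, h₂, m₂, rfl⟩, Sum.inl w, ?_, by rwa [eff_sum_inl]⟩
    rcases mem_Nminus.mp hw with rfl | hw
    · exact mem_Nminus.mpr (Or.inl rfl)
    · exact mem_Nminus.mpr (Or.inr hw)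

lemma consFP_inr (H₁ : Set (X₁ → Bool)) (H₂ : Set (X₂ → Bool)) (u : X₂) :
    consFP (sumG G₁ G₂) (prodH H₁ H₂) (Sum.inr u) = prodH H₁ (consFP G₂ H₂ u) := by
  ext h
  constructor
  · rintro ⟨⟨h₁, m₁, h₂, m₂, rfl⟩, w, hw, he⟩
    rcases mem_Nminus.mp hw with rfl | hw
    · exact ⟨h₁, m₁, h₂, ⟨m₂, u, self_mem_Nplus _, by rwa [eff_sum_inr] at he⟩, rfl⟩
    · cases w with
      | inr b =>
        exact ⟨h₁, m₁, h₂, ⟨m₂, b, mem_Nminus.mpr (Or.inr hw), by rwa [eff_sum_inr] at he⟩,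
          rfl⟩
      | inl b => exact absurd hw (by simp [sumG])
  · rintro ⟨h₁, m₁, h₂, ⟨m₂, w, hw, he⟩, rfl⟩
    refine ⟨⟨h₁, m₁, h₂, m₂, rfl⟩, Sum.inr w, ?_, by rwa [eff_sum_inr]⟩
    rcases mem_Nminus.mp hw with rfl | hw
    · exact mem_Nminus.mpr (Or.inl rfl)
    · exact mem_Nminus.mpr (Or.inr hw)

/-- Prepend an element to a sequence. -/
def consSeq {α : Sort*} (a : α) (f : ℕ → α) : ℕ → α := fun n => Nat.casesOn n a f

@[simp] lemma consSeq_zero {α : Sort*} (a : α) (f : ℕ → α) : consSeq a f 0 = a := rfl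
@[simp] lemma consSeq_succ {α : Sort*} (a : α) (f : ℕ → α) (n : ℕ) :
    consSeq a f (n + 1) = f n := rfl

lemma hist_zero (v : ℕ → X) (y : ℕ → Bool) : hist v y 0 = [] := by simp [hist]

lemma hist_consSeq (v : ℕ → X) (y : ℕ → Bool) (a : X) (b : Bool) (t : ℕ) :
    hist (consSeq a v) (consSeq b y) (t + 1) = (a, b) :: hist v y t := by
  unfold hist
  rw [List.range_succ_eq_map]
  simp [List.map_map, Function.comp_def]

/-- The adversary can force a mistake in every one of `T` rounds against learner `A`,
with a play that is realizable in `H`. -/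
def AdvProp (G : X → X → Prop) (H : Set (X → Bool)) (A : Alg X) (T : ℕ) : Prop :=
  ∃ h ∈ H, T = 0 ∨ ∃ (x v : ℕ → X) (y : ℕ → Bool),
    ∀ t < T, eff G h (x t) = y t ∧ isBR G (A (hist v y t)) (x t) (v t) ∧
      A (hist v y t) (v t) ≠ y t

lemma adv_le_MB {G : X → X → Prop} {H : Set (X → Bool)} {A : Alg X} {T : ℕ}
    (hA : AdvProp G H A T) : (T : ℕ∞) ≤ MistakeBound G H A := by
  obtain ⟨h, hm, hT⟩ := hA
  rcases hT with rfl | ⟨x, v, y, hplay⟩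
  · simp
  · apply le_sSup
    refine ⟨T, x, y, v, ⟨h, hm, fun t ht => (hplay t ht).1⟩,
      fun t ht => (hplay t ht).2.1, ?_⟩
    have hfil : ((Finset.range T).filter fun t => A (hist v y t) (v t) ≠ y t)
        = Finset.range T := by
      apply Finset.filter_true_of_mem
      intro t ht
      exact (hplay t (Finset.mem_range.mp ht)).2.2
    simp [mistakes, hfil]

lemma adv_prepend {G : X → X → Prop} {H H' : Set (X → Bool)} {A : Alg X} {T : ℕ}
    (v₀ : X) (y₀ : Bool)
    (hAdv : AdvProp G H' (fun L => A ((v₀, y₀) :: L)) T)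
    (hsub : H' ⊆ H)
    (hround : ∀ h ∈ H', ∃ x₀, eff G h x₀ = y₀ ∧ isBR G (A []) x₀ v₀ ∧ A [] v₀ ≠ y₀) :
    AdvProp G H A (T + 1) := by
  obtain ⟨h, hm, hT⟩ := hAdv
  obtain ⟨x₀, he₀, hbr₀, hmis₀⟩ := hround h hm
  refine ⟨h, hsub hm, Or.inr ?_⟩
  rcases hT with rfl | ⟨x, v, y, hplay⟩
  · refine ⟨fun _ => x₀, fun _ => v₀, fun _ => y₀, ?_⟩
    intro t ht
    interval_cases t
    rw [hist_zero]
    exact ⟨he₀, hbr₀, hmis₀⟩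
  · refine ⟨consSeq x₀ x, consSeq v₀ v, consSeq y₀ y, ?_⟩
    intro t ht
    cases t with
    | zero =>
      rw [hist_zero]
      exact ⟨he₀, hbr₀, hmis₀⟩
    | succ s =>
      rw [hist_consSeq]
      simp only [consSeq_succ]
      exact hplay s (by omega)

lemma key_induction (G₁ : X₁ → X₁ → Prop) (G₂ : X₂ → X₂ → Prop) (d : ℕ) :
    ∀ (H₁ : Set (X₁ → Bool)) (H₂ : Set (X₂ → Bool)) (A₁ : Alg X₁) (A₂ : Alg X₂),
      Shatters (sumG G₁ G₂) (prodH H₁ H₂) d →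
      ∃ T₁ T₂ : ℕ, T₁ + T₂ = d ∧ AdvProp G₁ H₁ A₁ T₁ ∧ AdvProp G₂ H₂ A₂ T₂ := by
  induction d with
  | zero =>
    intro H₁ H₂ A₁ A₂ hS
    obtain ⟨h, h₁, m₁, h₂, m₂, rfl⟩ := hS
    exact ⟨0, 0, rfl, ⟨h₁, m₁, Or.inl rfl⟩, ⟨h₂, m₂, Or.inl rfl⟩⟩
  | succ d ih =>
    intro H₁ H₂ A₁ A₂ hS
    obtain ⟨x, hFN, hFP⟩ := hS
    cases x with
    | inl x =>
      by_cases hpos : ∃ u ∈ Nplus G₁ x, A₁ [] u = true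
      · obtain ⟨u, hu, hval⟩ := hpos
        have hmem : Sum.inl u ∈ Nplus (sumG G₁ G₂) (Sum.inl x) := by
          rcases mem_Nplus.mp hu with rfl | hu
          · exact self_mem_Nplus _
          · exact mem_Nplus.mpr (Or.inr hu)
        have hsh := hFP (Sum.inl u) hmem
        rw [consFP_inl] at hsh
        obtain ⟨T₁, T₂, hT, hA1, hA2⟩ :=
          ih (consFP G₁ H₁ u) H₂ (fun L => A₁ ((u, false) :: L)) A₂ hsh
        refine ⟨T₁ + 1, T₂, by omega, ?_, hA2⟩
        refine adv_prepend u false hA1 (fun h hh => hh.1) ?_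
        rintro h ⟨hmH, w, hw, heff⟩
        exact ⟨w, heff, Or.inl ⟨Nplus_of_Nminus hw, hval⟩, by simp [hval]⟩
      · push_neg at hpos
        have hsh := hFN
        rw [consFN_inl] at hsh
        obtain ⟨T₁, T₂, hT, hA1, hA2⟩ :=
          ih (consFN G₁ H₁ x) H₂ (fun L => A₁ ((x, true) :: L)) A₂ hsh
        refine ⟨T₁ + 1, T₂, by omega, ?_, hA2⟩
        refine adv_prepend x true hA1 (fun h hh => hh.1) ?_
        rintro h ⟨hmH, heff⟩
        refine ⟨x, heff, Or.inr ⟨rfl, fun u hu => ?_⟩, ?_⟩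
        · simpa using hpos u hu
        · simpa using hpos x (self_mem_Nplus x)
    | inr x =>
      by_cases hpos : ∃ u ∈ Nplus G₂ x, A₂ [] u = true
      · obtain ⟨u, hu, hval⟩ := hpos
        have hmem : Sum.inr u ∈ Nplus (sumG G₁ G₂) (Sum.inr x) := by
          rcases mem_Nplus.mp hu with rfl | hu
          · exact self_mem_Nplus _
          · exact mem_Nplus.mpr (Or.inr hu)
        have hsh := hFP (Sum.inr u) hmem
        rw [consFP_inr] at hsh
        obtain ⟨T₁, T₂, hT, hA1, hA2⟩ :=
          ih H₁ (consFP G₂ H₂ u) A₁ (fun L => A₂ ((u, false) :: L)) hsh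
        refine ⟨T₁, T₂ + 1, by omega, hA1, ?_⟩
        refine adv_prepend u false hA2 (fun h hh => hh.1) ?_
        rintro h ⟨hmH, w, hw, heff⟩
        exact ⟨w, heff, Or.inl ⟨Nplus_of_Nminus hw, hval⟩, by simp [hval]⟩
      · push_neg at hpos
        have hsh := hFN
        rw [consFN_inr] at hsh
        obtain ⟨T₁, T₂, hT, hA1, hA2⟩ :=
          ih H₁ (consFN G₂ H₂ x) A₁ (fun L => A₂ ((x, true) :: L)) hsh
        refine ⟨T₁, T₂ + 1, by omega, hA1, ?_⟩
        refine adv_prepend x true hA2 (fun h hh => hh.1) ?_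
        rintro h ⟨hmH, heff⟩
        refine ⟨x, heff, Or.inr ⟨rfl, fun u hu => ?_⟩, ?_⟩
        · simpa using hpos u hu
        · simpa using hpos x (self_mem_Nplus x)

lemma exists_min_MB (G : X → X → Prop) (H : Set (X → Bool)) :
    ∃ A : Alg X, MistakeBound G H A = Mopt G H := by
  obtain ⟨m, hm, hmin⟩ := (wellFounded_lt (α := ℕ∞)).has_min
    (Set.range (MistakeBound G H)) ⟨_, Set.mem_range_self (fun _ _ => true)⟩
  obtain ⟨A, rfl⟩ := hm
  refine ⟨A, le_antisymm ?_ (iInf_le _ _)⟩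
  exact le_iInf fun A' => not_lt.mp (hmin _ (Set.mem_range_self A'))

end Aux

/-- If the manipulation graph decomposes as a disjoint union
`G = G₁ ⊔ G₂` and `H = H₁ × H₂` is the product hypothesis class, then
`SLdim(H,G) ≤ M₁ + M₂` for any achievable deterministic mistake bounds `M_i` of `(H_i,G_i)`
(i.e. the bounds achieved by any two deterministic learners); in particular
`SLdim(H,G) ≤ M(H₁,G₁) + M(H₂,G₂)`. -/
theorem SLdim_disjoint_union_le (X₁ X₂ : Type*) (G₁ : X₁ → X₁ → Prop)
    (G₂ : X₂ → X₂ → Prop) (H₁ : Set (X₁ → Bool)) (H₂ : Set (X₂ → Bool)) :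
    (∀ (A₁ : Alg X₁) (A₂ : Alg X₂),
      SLdim (sumG G₁ G₂) (prodH H₁ H₂) ≤
        MistakeBound G₁ H₁ A₁ + MistakeBound G₂ H₂ A₂) ∧
    SLdim (sumG G₁ G₂) (prodH H₁ H₂) ≤ Mopt G₁ H₁ + Mopt G₂ H₂ := by
  have main : ∀ (A₁ : Alg X₁) (A₂ : Alg X₂),
      SLdim (sumG G₁ G₂) (prodH H₁ H₂) ≤
        MistakeBound G₁ H₁ A₁ + MistakeBound G₂ H₂ A₂ := by
    intro A₁ A₂
    apply sSup_le
    rintro e ⟨n, rfl, hS⟩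
    obtain ⟨T₁, T₂, hT, h1, h2⟩ := key_induction G₁ G₂ n H₁ H₂ A₁ A₂ hS
    calc (n : ℕ∞) = (T₁ : ℕ∞) + (T₂ : ℕ∞) := by
          rw [← Nat.cast_add, hT]
      _ ≤ MistakeBound G₁ H₁ A₁ + MistakeBound G₂ H₂ A₂ :=
          add_le_add (adv_le_MB h1) (adv_le_MB h2)
  refine ⟨main, ?_⟩
  obtain ⟨A₁, hA₁⟩ := exists_min_MB G₁ H₁
  obtain ⟨A₂, hA₂⟩ := exists_min_MB G₂ H₂
  rw [← hA₁, ← hA₂]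
  exact main A₁ A₂
end

section
/- For the clique K_N with hypothesis class consisting of all functions {-1,+1}^{K_N}, the effective classifier of every hypothesis is constant, and the deterministic strategy 'predict all-negative until the first mistake, then all-positive forever' makes at most 1 mistake on any realizable sequence; hence SLdim({±1}^{K_N}, K_N) ≤ 1, while Δ⁺·Ldim of the class is N·N. -/
open Classical

variable {X : Type*}

/-- `LShatters H d`: there exists a classical Littlestone tree of depth `d` shattered by `H`. -/
def LShatters (H : Set (X → Bool)) : ℕ → Prop
  | 0 => H.Nonempty
  | d + 1 => ∃ x : X,
      LShatters {h ∈ H | h x = true} d ∧ LShatters {h ∈ H | h x = false} d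

/-- The classical Littlestone dimension of `H`. -/
noncomputable def Ldim (H : Set (X → Bool)) : ℕ∞ :=
  sSup {d : ℕ∞ | ∃ n : ℕ, d = n ∧ LShatters H n}


/-- The complete (bidirected) graph on `Fin N`. -/
def cliqueG (N : ℕ) : Fin N → Fin N → Prop := fun a b => a ≠ b

/-- The deterministic strategy "predict all-negative until the first mistake, then
all-positive forever". -/
def flipAlg (N : ℕ) : Alg (Fin N) := fun l _ => l.any fun p => p.2

lemma Nplus_clique (N : ℕ) (x : Fin N) : Nplus (cliqueG N) x = Set.univ := by
  ext v
  simp only [Nplus, cliqueG, Set.mem_insert_iff, Set.mem_setOf_eq, Set.mem_univ, iff_true]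
  by_cases h : v = x
  · exact Or.inl h
  · exact Or.inr (fun hx => h hx.symm)

lemma eff_clique (N : ℕ) (h : Fin N → Bool) (x : Fin N) :
    eff (cliqueG N) h x = if ∃ v, h v = true then true else false := by
  unfold eff
  rw [Nplus_clique]
  simp

lemma eff_clique_const (N : ℕ) (h : Fin N → Bool) (x x' : Fin N) :
    eff (cliqueG N) h x = eff (cliqueG N) h x' := by
  rw [eff_clique, eff_clique]

lemma consFP_consFN_empty (N : ℕ) (H : Set (Fin N → Bool)) (x v : Fin N) :
    consFP (cliqueG N) (consFN (cliqueG N) H x) v = ∅ := by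
  ext h
  simp only [consFP, consFN, Set.mem_setOf_eq, Set.mem_empty_iff_false, iff_false]
  rintro ⟨⟨hH, hfn⟩, u, hu, hfp⟩
  rw [eff_clique] at hfn hfp
  rw [hfn] at hfp
  exact Bool.noConfusion hfp

lemma not_shatters_empty {Y : Type*} (G : Y → Y → Prop) :
    ∀ n, ¬ Shatters G (∅ : Set (Y → Bool)) n := by
  intro n
  induction n with
  | zero => simp [Shatters]
  | succ n ih =>
    rintro ⟨x, h1, _⟩
    have hfn : consFN G (∅ : Set (Y → Bool)) x = ∅ := by
      ext h; simp [consFN]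
    rw [hfn] at h1
    exact ih h1

lemma lshatters_of_finset {Y : Type*} :
    ∀ (n : ℕ) (H : Set (Y → Bool)) (s : Finset Y), s.card = n →
      (∀ f : Y → Bool, ∃ h ∈ H, ∀ x ∈ s, h x = f x) → LShatters H n := by
  intro n
  induction n with
  | zero =>
    intro H s _ hf
    obtain ⟨h, hH, _⟩ := hf (fun _ => true)
    exact ⟨h, hH⟩
  | succ n ih =>
    intro H s hcard hf
    obtain ⟨x, hx⟩ := Finset.card_pos.mp (by omega : 0 < s.card)
    have hkey : ∀ b : Bool, ∀ f : Y → Bool, ∃ h ∈ {h ∈ H | h x = b}, ∀ u ∈ s.erase x, h u = f u := by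
      intro b f
      obtain ⟨h, hH, hagree⟩ := hf (Function.update f x b)
      refine ⟨h, ⟨hH, by rw [hagree x hx, Function.update_self]⟩, ?_⟩
      intro u hu
      rw [hagree u (Finset.mem_of_mem_erase hu),
        Function.update_of_ne (Finset.ne_of_mem_erase hu)]
    have hc : (s.erase x).card = n := by
      rw [Finset.card_erase_of_mem hx, hcard]; omega
    exact ⟨x, ih _ (s.erase x) hc (hkey true), ih _ (s.erase x) hc (hkey false)⟩

lemma two_pow_le_ncard {Y : Type*} [Finite Y] :
    ∀ (n : ℕ) (H : Set (Y → Bool)), LShatters H n → 2 ^ n ≤ H.ncard := by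
  intro n
  induction n with
  | zero =>
    rintro H ⟨h, hh⟩
    simpa using Nat.succ_le_of_lt ((Set.ncard_pos (Set.toFinite H)).mpr ⟨h, hh⟩)
  | succ n ih =>
    rintro H ⟨x, h1, h2⟩
    set A := {h ∈ H | h x = true} with hA
    set B := {h ∈ H | h x = false} with hB
    have hAB : A ∪ B = H := by
      ext h
      simp only [hA, hB, Set.mem_union, Set.mem_setOf_eq]
      cases hhx : h x <;> tauto
    have hdisj : Disjoint A B := by
      rw [Set.disjoint_left]
      rintro h ⟨_, ht⟩ ⟨_, hf⟩
      rw [ht] at hf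
      exact Bool.noConfusion hf
    calc 2 ^ (n + 1) = 2 ^ n + 2 ^ n := by ring
      _ ≤ A.ncard + B.ncard := add_le_add (ih A h1) (ih B h2)
      _ = (A ∪ B).ncard := (Set.ncard_union_eq hdisj (Set.toFinite A) (Set.toFinite B)).symm
      _ = H.ncard := by rw [hAB]

/-- For the clique `K_N` with the hypothesis class of all functions, the
effective classifier of every hypothesis is constant; the strategy "all-negative until the
first mistake, then all-positive" makes at most one mistake on any realizable sequence; hence
`SLdim({±1}^{K_N}, K_N) ≤ 1`, while the classical Littlestone dimension of the class is `N`
(so that `Δ⁺ · Ldim` is of order `N · N`). -/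
theorem clique_SLdim_le_one (N : ℕ) (hN : 1 ≤ N) :
    (∀ (h : Fin N → Bool) (x x' : Fin N), eff (cliqueG N) h x = eff (cliqueG N) h x') ∧
    MistakeBound (cliqueG N) Set.univ (flipAlg N) ≤ 1 ∧
    SLdim (cliqueG N) (Set.univ : Set (Fin N → Bool)) ≤ 1 ∧
    Ldim (Set.univ : Set (Fin N → Bool)) = (N : ℕ∞) := by
  refine ⟨eff_clique_const N, ?_, ?_, ?_⟩
  · -- Mistake bound
    apply sSup_le
    rintro n ⟨T, x, y, v, ⟨h, -, hcons⟩, -, rfl⟩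
    have hconst : ∀ s t, s < T → t < T → y s = y t := by
      intro s t hs ht
      rw [← hcons s hs, ← hcons t ht, eff_clique, eff_clique]
    have hpred_iff : ∀ t, flipAlg N (hist v y t) (v t) = true ↔ ∃ i < t, y i = true := by
      intro t
      simp [flipAlg, hist, List.any_eq_true]
    have hsub : ((Finset.range T).filter fun t => flipAlg N (hist v y t) (v t) ≠ y t)
        ⊆ {0} := by
      intro t ht
      simp only [Finset.mem_filter, Finset.mem_range] at ht
      obtain ⟨htT, hmis⟩ := ht
      simp only [Finset.mem_singleton]
      by_contra h0
      have ht0 : 0 < t := Nat.pos_of_ne_zero h0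
      apply hmis
      cases hc : y t with
      | true =>
        exact (hpred_iff t).mpr ⟨0, ht0, (hconst 0 t (ht0.trans htT) htT).trans hc⟩
      | false =>
        rw [Bool.eq_false_iff]
        intro hp
        obtain ⟨i, hi, hyi⟩ := (hpred_iff t).mp hp
        rw [hconst i t (hi.trans htT) htT, hc] at hyi
        exact Bool.noConfusion hyi
    have hcard := Finset.card_le_card hsub
    simp only [Finset.card_singleton] at hcard
    exact_mod_cast hcard
  · -- SLdim ≤ 1
    apply sSup_le
    rintro d ⟨n, rfl, hsh⟩
    by_contra hlt
    have hn : 2 ≤ n := by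
      rcases n with _ | _ | n
      · exact absurd (by simp) hlt
      · exact absurd (le_refl _) (by exact_mod_cast hlt)
      · omega
    obtain ⟨m, rfl⟩ : ∃ m, n = m + 2 := ⟨n - 2, by omega⟩
    obtain ⟨x, h1, -⟩ := hsh
    obtain ⟨x', -, h3⟩ := h1
    have hx' := h3 x' (Set.mem_insert x' _)
    rw [consFP_consFN_empty] at hx'
    exact not_shatters_empty _ _ hx'
  · -- Ldim = N
    have hcardU : (Set.univ : Set (Fin N → Bool)).ncard = 2 ^ N := by
      simp [Set.ncard_univ, Nat.card_eq_fintype_card]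
    apply le_antisymm
    · apply sSup_le
      rintro d ⟨n, rfl, hsh⟩
      have h2 := two_pow_le_ncard n _ hsh
      rw [hcardU] at h2
      have : n ≤ N := (Nat.pow_le_pow_iff_right (by norm_num)).mp h2
      exact_mod_cast this
    · apply le_sSup
      refine ⟨N, rfl, lshatters_of_finset N _ Finset.univ (by simp) ?_⟩
      exact fun f => ⟨f, Set.mem_univ f, fun _ _ => rfl⟩
end

section
/- In the Biased Weighted Majority Vote algorithm run with input graph G containing all edges of the true manipulation graph G*, every expert whose weight is penalized at a mistake round must itself have made a mistake under G* at that round: on a false positive at v_t, a penalized expert labels v_t positive and hence its effective classifier under G* labels the true agent positively while the truth is negative; on a false negative, a penalized expert labels all of N̂[v_t] ⊇ N⁺_{G*}[v_t] negative, hence its effective classifier under G* labels the agent negative while the truth is positive. -/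
open Classical

variable {X : Type*}

/-- In Biased Weighted Majority Vote run with an input graph `G` containing
all edges of the true manipulation graph `G*`, every penalized expert made a mistake under
`G*`: on a false positive at `v_t ∈ N⁺_{G*}[x_t]` (true label `-1`), a penalized expert labels
`v_t` positive, hence its effective classifier under `G*` labels the agent `x_t` positive; on
a false negative at `v_t = x_t` (true label `+1`), a penalized expert labels all of a set
`N̂[v_t]` with `N⁺_{G*}[v_t] ⊆ N̂[v_t] ⊆ N⁺_G[v_t]` negative, hence its effective classifier
under `G*` labels `x_t` negative. -/
theorem penalized_experts_err (X : Type*) (Gs G : X → X → Prop)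
    (hsub : ∀ a b : X, Gs a b → G a b) :
    (∀ (x v : X) (e : X → Bool),
      v ∈ Nplus Gs x → e v = true → eff Gs e x = true) ∧
    (∀ (x : X) (Nh : Set X) (e : X → Bool),
      Nplus Gs x ⊆ Nh → Nh ⊆ Nplus G x → (∀ u ∈ Nh, e u = false) →
      eff Gs e x = false) := by
  constructor
  · intro x v e hv he
    rw [eff, if_pos ⟨v, hv, he⟩]
  · intro x Nh e hsub1 _ hneg
    simp only [eff, ite_eq_right_iff]
    rintro ⟨v, hv, he⟩
    exact absurd (hneg v (hsub1 hv)) (by simp [he])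
end
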